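/- Let P1 and P2 be paths on the triangular grid, each with exactly one bend. Suppose some segment of P1 and some segment of P2 lie on the same grid line l and these two segments have exactly one grid point b in common. If E(P1) ∩ E(P2) ≠ ∅, then b is the bend point of both P1 and P2, b is an endpoint of at least one edge of E(P1) ∩ E(P2), and E(P1) ∩ E(P2) is not contained in the set of edges lying on l. -/

import Mathlib

/-- The triangular grid: the simple graph on `ℤ × ℤ` where two points are adjacent
iff their difference is `±(1,0)`, `±(0,1)` or `±(1,1)`. -/
def TGrid : SimpleGraph (ℤ × ℤ) where
  Adj u v :=
    (v.1 - u.1 = 1 ∧ v.2 - u.2 = 0) ∨ (v.1 - u.1 = -1 ∧ v.2 - u.2 = 0) ∨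
    (v.1 - u.1 = 0 ∧ v.2 - u.2 = 1) ∨ (v.1 - u.1 = 0 ∧ v.2 - u.2 = -1) ∨
    (v.1 - u.1 = 1 ∧ v.2 - u.2 = 1) ∨ (v.1 - u.1 = -1 ∧ v.2 - u.2 = -1)
  symm := ⟨by intro u v h; omega⟩
  loopless := ⟨by intro u h; omega⟩

/-- The (symmetric) direction datum of a grid edge: the pair of absolute coordinate
differences.  For grid edges this is `(1,0)` (horizontal), `(0,1)` (vertical) or
`(1,1)` (diagonal). -/
def edir (e : Sym2 (ℤ × ℤ)) : ℤ × ℤ :=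
  Sym2.lift ⟨fun u v => (|u.1 - v.1|, |u.2 - v.2|), by
    intro u v; simp [abs_sub_comm]⟩ e

/-- The `t`-th edge of a walk. -/
def wEdge {u v : ℤ × ℤ} (p : TGrid.Walk u v) (t : ℕ) : Sym2 (ℤ × ℤ) :=
  s(p.getVert t, p.getVert (t + 1))

/-- The number of bends of a walk: the number of consecutive pairs of edges with
different directions. -/
def bendCount {u v : ℤ × ℤ} (p : TGrid.Walk u v) : ℕ :=
  (List.range (p.length - 1)).countP
    (fun i => decide (edir (wEdge p i) ≠ edir (wEdge p (i + 1))))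

/-- `b` is a bend point of the walk `p`. -/
def IsBendAt {u v : ℤ × ℤ} (p : TGrid.Walk u v) (b : ℤ × ℤ) : Prop :=
  ∃ i : ℕ, i + 2 ≤ p.length ∧ p.getVert (i + 1) = b ∧
    edir (wEdge p i) ≠ edir (wEdge p (i + 1))

/-- A (nontrivial simple) path on the triangular grid. -/
structure TPath where
  src : ℤ × ℤ
  dst : ℤ × ℤ
  walk : TGrid.Walk src dst
  isPath : walk.IsPath
  nontriv : 0 < walk.length

/-- The set of grid edges of a path. -/
def pEdges (P : TPath) : Set (Sym2 (ℤ × ℤ)) := {e | e ∈ P.walk.edges}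

/-- The set of grid points of a path. -/
def pPts (P : TPath) : Set (ℤ × ℤ) := {q | q ∈ P.walk.support}

/-- A segment of a path: a maximal straight (bend-free) subpath, recorded by the
interval of edge indices `[i, j)` it occupies. -/
structure Segment (P : TPath) where
  i : ℕ
  j : ℕ
  lt : i < j
  le : j ≤ P.walk.length
  straight : ∀ t, i ≤ t → t < j → edir (wEdge P.walk t) = edir (wEdge P.walk i)
  maxLeft : i = 0 ∨ edir (wEdge P.walk (i - 1)) ≠ edir (wEdge P.walk i)
  maxRight : j = P.walk.length ∨ edir (wEdge P.walk (j - 1)) ≠ edir (wEdge P.walk j)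

/-- The set of grid edges of a segment. -/
def Segment.edges {P : TPath} (s : Segment P) : Set (Sym2 (ℤ × ℤ)) :=
  {e | ∃ t, s.i ≤ t ∧ t < s.j ∧ e = wEdge P.walk t}

/-- The set of grid points of a segment. -/
def Segment.pts {P : TPath} (s : Segment P) : Set (ℤ × ℤ) :=
  {q | ∃ t, s.i ≤ t ∧ t ≤ s.j ∧ q = P.walk.getVert t}

/-- The direction of a segment. -/
def Segment.dir {P : TPath} (s : Segment P) : ℤ × ℤ := edir (wEdge P.walk s.i)

/-- The three directions of the triangular grid. -/
inductive Dir | H | V | D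
deriving DecidableEq

/-- The direction of the (straight) line from `a` to `b`. -/
def dirOf (a b : ℤ × ℤ) : Dir :=
  if a.2 = b.2 then .H else if a.1 = b.1 then .V else .D

/-- A grid line of the triangular grid: a full horizontal, vertical or diagonal line. -/
structure GridLine where
  dir : Dir
  c : ℤ

/-- The parametrization of the points of a grid line. -/
def GridLine.pt (l : GridLine) (t : ℤ) : ℤ × ℤ :=
  match l.dir with
  | .H => (t, l.c)
  | .V => (l.c, t)
  | .D => (l.c + t, t)

/-- The `t`-th edge of a grid line. -/
def GridLine.edge (l : GridLine) (t : ℤ) : Sym2 (ℤ × ℤ) := s(l.pt t, l.pt (t + 1))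

/-- The set of grid points of a grid line. -/
def GridLine.pts (l : GridLine) : Set (ℤ × ℤ) := Set.range l.pt

/-- The set of grid edges of a grid line. -/
def GridLine.edges (l : GridLine) : Set (Sym2 (ℤ × ℤ)) := Set.range l.edge

/-- A right triangle of the triangular grid, given by a base corner `p`, a leg
length `k ≥ 1`, and one of the two possible orientations. -/
structure RightTri where
  p : ℤ × ℤ
  k : ℤ
  hk : 1 ≤ k
  orientA : Bool

/-- The set of grid edges of a right triangle. -/
def RightTri.edges (T : RightTri) : Set (Sym2 (ℤ × ℤ)) :=
  if T.orientA then
    {e | ∃ t : ℤ, 0 ≤ t ∧ t < T.k ∧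
      (e = s((T.p.1 + t, T.p.2), (T.p.1 + t + 1, T.p.2)) ∨
       e = s((T.p.1 + T.k, T.p.2 + t), (T.p.1 + T.k, T.p.2 + t + 1)) ∨
       e = s((T.p.1 + t, T.p.2 + t), (T.p.1 + t + 1, T.p.2 + t + 1)))}
  else
    {e | ∃ t : ℤ, 0 ≤ t ∧ t < T.k ∧
      (e = s((T.p.1, T.p.2 + t), (T.p.1, T.p.2 + t + 1)) ∨
       e = s((T.p.1 + t, T.p.2 + T.k), (T.p.1 + t + 1, T.p.2 + T.k)) ∨
       e = s((T.p.1 + t, T.p.2 + t), (T.p.1 + t + 1, T.p.2 + t + 1)))}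

/-- The three corners of a right triangle. -/
def RightTri.corners (T : RightTri) : Set (ℤ × ℤ) :=
  if T.orientA then {T.p, (T.p.1 + T.k, T.p.2), (T.p.1 + T.k, T.p.2 + T.k)}
  else {T.p, (T.p.1, T.p.2 + T.k), (T.p.1 + T.k, T.p.2 + T.k)}

/-- `U(𝒫)`: the subgraph of the grid formed by all segments of members of the family
that share at least one grid edge with another member, given by its set of edges. -/
def UEdges {ι : Type} (P : ι → TPath) : Set (Sym2 (ℤ × ℤ)) :=
  {e | ∃ i : ι, ∃ s : Segment (P i), e ∈ s.edges ∧
        ∃ j : ι, j ≠ i ∧ (s.edges ∩ pEdges (P j)).Nonempty}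

/-- A B₁-EPGₜ representation of a simple graph `G`: a family of at most-one-bend
paths on the triangular grid whose edge-intersection graph is `G`. -/
def IsB1EPGtRep {V : Type} (G : SimpleGraph V) (Rep : V → TPath) : Prop :=
  (∀ v, bendCount (Rep v).walk ≤ 1) ∧
  ∀ u v : V, u ≠ v → (G.Adj u v ↔ (pEdges (Rep u) ∩ pEdges (Rep v)).Nonempty)

open SimpleGraph Walk

/-- absolute direction -/
def absd (d : ℤ × ℤ) : ℤ × ℤ := (|d.1|, |d.2|)

def isStep (d : ℤ × ℤ) : Prop :=
  d = (1,0) ∨ d = (-1,0) ∨ d = (0,1) ∨ d = (0,-1) ∨ d = (1,1) ∨ d = (-1,-1)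

def ldirv : Dir → ℤ × ℤ
  | .H => (1,0)
  | .V => (0,1)
  | .D => (1,1)

def ray (b u : ℤ × ℤ) (k : ℕ) : ℤ × ℤ := (b.1 + k * u.1, b.2 + k * u.2)

lemma edir_mk (a b : ℤ × ℤ) : edir s(a,b) = (|a.1 - b.1|, |a.2 - b.2|) := rfl

lemma mem_edges_iff {u v : ℤ × ℤ} (p : TGrid.Walk u v) (e : Sym2 (ℤ × ℤ)) :
    e ∈ p.edges ↔ ∃ t, t < p.length ∧ e = wEdge p t := by
  induction p with
  | nil => simp
  | @cons a b c h q ih =>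
    simp only [Walk.edges_cons, List.mem_cons, ih, Walk.length_cons]
    constructor
    · rintro (rfl | ⟨t, ht, rfl⟩)
      · exact ⟨0, by omega, by simp [wEdge, Walk.getVert_cons_succ, Walk.getVert_zero]⟩
      · exact ⟨t + 1, by omega, by simp [wEdge, Walk.getVert_cons_succ]⟩
    · rintro ⟨t, ht, rfl⟩
      match t with
      | 0 => exact Or.inl (by simp [wEdge, Walk.getVert_cons_succ, Walk.getVert_zero])
      | t + 1 => exact Or.inr ⟨t, by omega, by simp [wEdge, Walk.getVert_cons_succ]⟩

lemma getVert_mem_support {u v : ℤ × ℤ} (p : TGrid.Walk u v) (i : ℕ) :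
    p.getVert i ∈ p.support := by
  induction p generalizing i with
  | nil => simp [Walk.getVert_of_length_le]
  | @cons a b c h q ih =>
    match i with
    | 0 => simp
    | i + 1 => simp [Walk.getVert_cons_succ, ih]

lemma getVert_inj {u v : ℤ × ℤ} (p : TGrid.Walk u v) (hp : p.IsPath) :
    ∀ i j, i ≤ p.length → j ≤ p.length → p.getVert i = p.getVert j → i = j := by
  induction p with
  | nil => intro i j hi hj _; simp only [Walk.length_nil, Nat.le_zero] at hi hj; omega
  | @cons a b c h q ih =>
    rw [Walk.cons_isPath_iff] at hp
    intro i j hi hj hij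
    match i, j with
    | 0, 0 => rfl
    | 0, j + 1 =>
      exfalso; apply hp.2
      rw [show (Walk.cons h q).getVert 0 = a from rfl] at hij
      rw [Walk.getVert_cons_succ] at hij
      rw [hij]; exact _root_.getVert_mem_support q j
    | i + 1, 0 =>
      exfalso; apply hp.2
      rw [show (Walk.cons h q).getVert 0 = a from rfl] at hij
      rw [Walk.getVert_cons_succ] at hij
      rw [← hij]; exact _root_.getVert_mem_support q i
    | i + 1, j + 1 =>
      simp only [Walk.getVert_cons_succ] at hij
      have := ih hp.1 i j (by simpa using hi) (by simpa using hj) hij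
      omega
def stepv {u v : ℤ × ℤ} (p : TGrid.Walk u v) (t : ℕ) : ℤ × ℤ :=
  ((p.getVert (t+1)).1 - (p.getVert t).1, (p.getVert (t+1)).2 - (p.getVert t).2)

lemma stepv_isStep {u v : ℤ × ℤ} (p : TGrid.Walk u v) {t : ℕ} (ht : t < p.length) :
    isStep (stepv p t) := by
  have h : ((p.getVert (t+1)).1 - (p.getVert t).1 = 1 ∧ (p.getVert (t+1)).2 - (p.getVert t).2 = 0) ∨
      ((p.getVert (t+1)).1 - (p.getVert t).1 = -1 ∧ (p.getVert (t+1)).2 - (p.getVert t).2 = 0) ∨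
      ((p.getVert (t+1)).1 - (p.getVert t).1 = 0 ∧ (p.getVert (t+1)).2 - (p.getVert t).2 = 1) ∨
      ((p.getVert (t+1)).1 - (p.getVert t).1 = 0 ∧ (p.getVert (t+1)).2 - (p.getVert t).2 = -1) ∨
      ((p.getVert (t+1)).1 - (p.getVert t).1 = 1 ∧ (p.getVert (t+1)).2 - (p.getVert t).2 = 1) ∨
      ((p.getVert (t+1)).1 - (p.getVert t).1 = -1 ∧ (p.getVert (t+1)).2 - (p.getVert t).2 = -1) :=
    p.adj_getVert_succ ht
  simp only [isStep, stepv, Prod.ext_iff, Prod.fst, Prod.snd]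
  omega

lemma edir_wEdge {u v : ℤ × ℤ} (p : TGrid.Walk u v) (t : ℕ) :
    edir (wEdge p t) = absd (stepv p t) := by
  simp [wEdge, edir_mk, absd, stepv, abs_sub_comm]

lemma step_helper (s1 s2 : ℤ × ℤ) (h1 : isStep s1) (h2 : isStep s2)
    (habs : absd s1 = absd s2) (hnb : s2 ≠ (-s1.1, -s1.2)) : s2 = s1 := by
  rcases h1 with rfl|rfl|rfl|rfl|rfl|rfl <;> rcases h2 with rfl|rfl|rfl|rfl|rfl|rfl <;>
    simp_all [absd, Prod.ext_iff] <;> omega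

lemma step_eq_of_edir_eq {u v : ℤ × ℤ} {p : TGrid.Walk u v} (hp : p.IsPath) {t : ℕ}
    (ht : t + 1 < p.length)
    (he : edir (wEdge p t) = edir (wEdge p (t+1))) : stepv p (t+1) = stepv p t := by
  apply step_helper _ _ (stepv_isStep p (by omega)) (stepv_isStep p ht)
  · rw [← edir_wEdge, ← edir_wEdge]; exact he
  · intro hback
    have hx := congrArg Prod.fst hback
    have hy := congrArg Prod.snd hback
    simp only [stepv] at hx hy
    simp only [show t+1+1 = t+2 from rfl] at hx hy
    have h1 : p.getVert (t+2) = p.getVert t := Prod.ext (by omega) (by omega)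
    have := getVert_inj p hp (t+2) t (by omega) (by omega) h1
    omega
lemma structure1 (P : TPath) (h : bendCount P.walk = 1) :
    ∃ (m : ℕ) (d1 d2 : ℤ × ℤ), 1 ≤ m ∧ m < P.walk.length ∧ isStep d1 ∧ isStep d2 ∧
      absd d1 ≠ absd d2 ∧
      (∀ t < m, stepv P.walk t = d1) ∧
      (∀ t, m ≤ t → t < P.walk.length → stepv P.walk t = d2) ∧
      (∀ j, j + 1 < P.walk.length →
        (edir (wEdge P.walk j) ≠ edir (wEdge P.walk (j+1)) ↔ j + 1 = m)) := by
  have hlen : 0 < P.walk.length := P.nontriv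
  rw [bendCount, List.countP_eq_length_filter] at h
  obtain ⟨a, ha⟩ := List.length_eq_one_iff.mp h
  have key : ∀ j, (j < P.walk.length - 1 ∧
      edir (wEdge P.walk j) ≠ edir (wEdge P.walk (j+1))) ↔ j = a := by
    intro j
    have h2 : j ∈ (List.range (P.walk.length - 1)).filter
        (fun i => decide (edir (wEdge P.walk i) ≠ edir (wEdge P.walk (i + 1)))) ↔ j ∈ [a] := by
      rw [ha]
    simpa [List.mem_filter, List.mem_range] using h2
  have haa := (key a).mpr rfl
  refine ⟨a + 1, stepv P.walk 0, stepv P.walk (a+1), by omega, by omega,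
    stepv_isStep P.walk (by omega), stepv_isStep P.walk (by omega), ?_, ?_, ?_, ?_⟩
  · have h1 : edir (wEdge P.walk a) ≠ edir (wEdge P.walk (a+1)) := haa.2
    rw [edir_wEdge, edir_wEdge] at h1
    -- stepv a = stepv 0
    have const1 : ∀ t, t ≤ a → stepv P.walk t = stepv P.walk 0 := by
      intro t
      induction t with
      | zero => intro _; rfl
      | succ t ih =>
        intro ht
        have hne : ¬ (t < P.walk.length - 1 ∧
            edir (wEdge P.walk t) ≠ edir (wEdge P.walk (t+1))) := by
          rw [key]; omega
        push_neg at hne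
        have he := hne (by omega)
        rw [step_eq_of_edir_eq P.isPath (by omega) he, ih (by omega)]
    rw [const1 a le_rfl] at h1
    exact h1
  · -- first run
    have const1 : ∀ t, t ≤ a → stepv P.walk t = stepv P.walk 0 := by
      intro t
      induction t with
      | zero => intro _; rfl
      | succ t ih =>
        intro ht
        have hne : ¬ (t < P.walk.length - 1 ∧
            edir (wEdge P.walk t) ≠ edir (wEdge P.walk (t+1))) := by
          rw [key]; omega
        push_neg at hne
        have he := hne (by omega)
        rw [step_eq_of_edir_eq P.isPath (by omega) he, ih (by omega)]
    intro t ht; exact const1 t (by omega)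
  · -- second run
    intro t hmt htl
    induction t with
    | zero => omega
    | succ t ih =>
      rcases Nat.eq_or_lt_of_le hmt with heq | hlt
      · rw [← heq]
      · have hne : ¬ (t < P.walk.length - 1 ∧
            edir (wEdge P.walk t) ≠ edir (wEdge P.walk (t+1))) := by
          rw [key]; omega
        push_neg at hne
        have he := hne (by omega)
        rw [step_eq_of_edir_eq P.isPath (by omega) he]
        exact ih (by omega) (by omega)
  · intro j hj
    constructor
    · intro hne; have := (key j).mp ⟨by omega, hne⟩; omega
    · intro hja
      have : j = a := by omega
      subst this; exact haa.2
lemma edir_line_edge (l : GridLine) {e : Sym2 (ℤ × ℤ)} (he : e ∈ l.edges) :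
    edir e = ldirv l.dir := by
  obtain ⟨t, rfl⟩ := he
  obtain ⟨d, c⟩ := l
  cases d <;>
    simp [GridLine.edge, GridLine.pt, edir_mk, ldirv, Prod.ext_iff]

lemma line_pts_of_edge (l : GridLine) {p q : ℤ × ℤ} (h : s(p,q) ∈ l.edges) :
    p ∈ l.pts ∧ q ∈ l.pts := by
  obtain ⟨t, ht⟩ := h
  rw [GridLine.edge, Sym2.eq_iff] at ht
  rcases ht with ⟨h1, h2⟩ | ⟨h1, h2⟩
  · exact ⟨⟨t, h1⟩, ⟨t+1, h2⟩⟩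
  · exact ⟨⟨t+1, h2⟩, ⟨t, h1⟩⟩

lemma step_ne_zero {d : ℤ × ℤ} (hd : isStep d) : d.1 ≠ 0 ∨ d.2 ≠ 0 := by
  rcases hd with rfl|rfl|rfl|rfl|rfl|rfl <;> simp

lemma isStep_neg {d : ℤ × ℤ} (hd : isStep d) : isStep (-d.1, -d.2) := by
  rcases hd with rfl|rfl|rfl|rfl|rfl|rfl <;> simp [isStep]

lemma absd_neg (d : ℤ × ℤ) : absd (-d.1, -d.2) = absd d := by simp [absd]

lemma line_cancel (l : GridLine) {b1 b2 u : ℤ × ℤ} {z : ℤ} (hu : isStep u)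
    (hd : absd u ≠ ldirv l.dir) (h1 : b1 ∈ l.pts) (h2 : b2 ∈ l.pts)
    (e1 : b1.1 - b2.1 = z * u.1) (e2 : b1.2 - b2.2 = z * u.2) : b1 = b2 := by
  obtain ⟨t1, ht1⟩ := h1
  obtain ⟨t2, ht2⟩ := h2
  obtain ⟨d, c⟩ := l
  subst ht1 ht2
  cases d <;> rcases hu with rfl|rfl|rfl|rfl|rfl|rfl <;>
    first
    | (refine absurd ?_ hd
       norm_num [absd, ldirv]
       done)
    | (simp only [GridLine.pt, Prod.mk.injEq, mul_zero, mul_one, and_true, true_and] at e1 e2 ⊢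
       omega)

lemma seg_cases (P : TPath) {m : ℕ} (hm1 : 1 ≤ m) (hm2 : m < P.walk.length)
    (key : ∀ j, j + 1 < P.walk.length →
      (edir (wEdge P.walk j) ≠ edir (wEdge P.walk (j+1)) ↔ j + 1 = m))
    (s : Segment P) : (s.i = 0 ∧ s.j = m) ∨ (s.i = m ∧ s.j = P.walk.length) := by
  have hij := s.lt
  have hjl := s.le
  have hi : s.i = 0 ∨ s.i = m := by
    rcases s.maxLeft with h0 | hne
    · exact Or.inl h0
    · right
      rcases Nat.eq_zero_or_pos s.i with h0 | hpos
    -- if s.i = 0 then hne is about wEdge (0-1) = wEdge 0, contradiction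
      · exfalso; rw [h0] at hne; exact hne rfl
      · have hrw : s.i - 1 + 1 = s.i := by omega
        have hk := (key (s.i - 1) (by omega)).mp (by rw [hrw]; exact hne)
        omega
  have hj : s.j = m ∨ s.j = P.walk.length := by
    rcases Nat.lt_or_ge s.j P.walk.length with hjlt | hge
    · left
      rcases s.maxRight with h0 | hne
      · omega
      · have hrw : s.j - 1 + 1 = s.j := by omega
        have hk := (key (s.j - 1) (by omega)).mp (by rw [hrw]; exact hne)
        omega
    · right; omega
  rcases hi with hi | hi <;> rcases hj with hj | hj
  · exact Or.inl ⟨hi, hj⟩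
  · -- s = (0, len) : contradiction with straightness
    exfalso
    have hs1 := s.straight (m-1) (by omega) (by omega)
    have hs2 := s.straight m (by omega) (by omega)
    have hk := (key (m-1) (by omega)).mpr (by omega)
    rw [show m - 1 + 1 = m from by omega] at hk
    exact hk (hs1.trans hs2.symm)
  · exfalso; omega
  · exact Or.inr ⟨hi, hj⟩
lemma main1 (P : TPath) (h : bendCount P.walk = 1) (s : Segment P)
    (l : GridLine) (hl : s.edges ⊆ l.edges) :
    ∃ (b0 u : ℤ × ℤ) (n : ℕ), 1 ≤ n ∧ isStep u ∧ absd u ≠ ldirv l.dir ∧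
      IsBendAt P.walk b0 ∧ b0 ∈ s.pts ∧ b0 ∈ l.pts ∧
      (∀ k, k < n → s(ray b0 u k, ray b0 u (k+1)) ∈ pEdges P) ∧
      (∀ e ∈ pEdges P,
        (e ∈ l.edges ∧ ∃ p q : ℤ × ℤ, e = s(p,q) ∧ p ≠ q ∧ p ∈ s.pts ∧ q ∈ s.pts) ∨
        ∃ k, k < n ∧ e = s(ray b0 u k, ray b0 u (k+1))) := by
  obtain ⟨m, d1, d2, hm1, hm2, hd1, hd2, hdd, hrun1, hrun2, key⟩ := structure1 P h
  have hbend : IsBendAt P.walk (P.walk.getVert m) := by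
    have hrw : m - 1 + 1 = m := by omega
    refine ⟨m - 1, by omega, by rw [hrw], ?_⟩
    have := (key (m-1) (by rw [hrw]; omega)).mpr (by omega)
    exact this
  rcases seg_cases P hm1 hm2 key s with ⟨hi, hj⟩ | ⟨hi, hj⟩
  · -- s is the first run [0, m); other run: [m, len) with step d2
    have hldir : ldirv l.dir = absd d1 := by
      have he0 : wEdge P.walk 0 ∈ Segment.edges s := ⟨0, by omega, by omega, rfl⟩
      have := edir_line_edge l (hl he0)
      rw [edir_wEdge, hrun1 0 (by omega)] at this
      exact this.symm
    have rayfact : ∀ k, m + k ≤ P.walk.length →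
        P.walk.getVert (m + k) = ray (P.walk.getVert m) d2 k := by
      intro k
      induction k with
      | zero => intro _; simp [ray]
      | succ k ih =>
        intro hk
        have hs := hrun2 (m + k) (by omega) (by omega)
        have h1 := congrArg Prod.fst hs
        have h2 := congrArg Prod.snd hs
        simp only [stepv] at h1 h2
        have ihh := ih (by omega)
        have i1 := congrArg Prod.fst ihh
        have i2 := congrArg Prod.snd ihh
        simp only [ray] at i1 i2 ⊢
        rw [show m + (k + 1) = m + k + 1 from rfl]
        refine Prod.ext ?_ ?_ <;> push_cast at * <;> linarith [h1, h2, i1, i2]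
    refine ⟨P.walk.getVert m, d2, P.walk.length - m, by omega, hd2,
      by rw [hldir]; exact fun hc => hdd hc.symm, hbend,
      ⟨m, by omega, by omega, rfl⟩, ?_, ?_, ?_⟩
    · -- b0 ∈ l.pts : endpoint of edge (m-1) of s
      have hme : wEdge P.walk (m-1) ∈ Segment.edges s := ⟨m-1, by omega, by omega, rfl⟩
      have := hl hme
      rw [wEdge, show m - 1 + 1 = m from by omega] at this
      exact (line_pts_of_edge l this).2
    · -- ray edges are edges of P
      intro k hk
      have : wEdge P.walk (m + k) = s(ray (P.walk.getVert m) d2 k, ray (P.walk.getVert m) d2 (k+1)) := by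
        rw [wEdge, rayfact k (by omega), show m + k + 1 = m + (k+1) from rfl,
          rayfact (k+1) (by omega)]
      rw [← this]
      exact (mem_edges_iff P.walk _).mpr ⟨m + k, by omega, rfl⟩
    · -- dichotomy
      intro e he
      obtain ⟨t, ht, rfl⟩ := (mem_edges_iff P.walk e).mp he
      rcases Nat.lt_or_ge t m with htm | htm
      · left
        have hes : wEdge P.walk t ∈ Segment.edges s := ⟨t, by omega, by omega, rfl⟩
        refine ⟨hl hes, P.walk.getVert t, P.walk.getVert (t+1), rfl, ?_,
          ⟨t, by omega, by omega, rfl⟩, ⟨t+1, by omega, by omega, rfl⟩⟩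
        intro hc
        have hs := hrun1 t htm
        have h1 := congrArg Prod.fst hs
        have h2 := congrArg Prod.snd hs
        simp only [stepv] at h1 h2
        have c1 := congrArg Prod.fst hc
        have c2 := congrArg Prod.snd hc
        rcases step_ne_zero hd1 with hne | hne <;> [exact hne (by omega); exact hne (by omega)]
      · right
        obtain ⟨k, rfl⟩ : ∃ k, t = m + k := ⟨t - m, by omega⟩
        refine ⟨k, by omega, ?_⟩
        rw [wEdge, rayfact k (by omega), show m + k + 1 = m + (k+1) from rfl,
          rayfact (k+1) (by omega)]
  · -- s is the second run [m, len); other run: [0, m) with step d1 reversed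
    have hldir : ldirv l.dir = absd d2 := by
      have he0 : wEdge P.walk m ∈ Segment.edges s := ⟨m, by omega, by omega, rfl⟩
      have := edir_line_edge l (hl he0)
      rw [edir_wEdge, hrun2 m (by omega) (by omega)] at this
      exact this.symm
    set u : ℤ × ℤ := (-d1.1, -d1.2) with hu
    have rayfact : ∀ k, k ≤ m →
        P.walk.getVert (m - k) = ray (P.walk.getVert m) u k := by
      intro k
      induction k with
      | zero => intro _; simp [ray]
      | succ k ih =>
        intro hk
        have hs := hrun1 (m - (k+1)) (by omega)
        have h1 := congrArg Prod.fst hs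
        have h2 := congrArg Prod.snd hs
        simp only [stepv] at h1 h2
        rw [show m - (k+1) + 1 = m - k from by omega] at h1 h2
        have ihh := ih (by omega)
        have i1 := congrArg Prod.fst ihh
        have i2 := congrArg Prod.snd ihh
        simp only [ray, hu] at i1 i2 ⊢
        refine Prod.ext ?_ ?_ <;> push_cast at * <;> linarith [h1, h2, i1, i2]
    have hedge : ∀ k, k < m → wEdge P.walk (m - 1 - k) =
        s(ray (P.walk.getVert m) u k, ray (P.walk.getVert m) u (k+1)) := by
      intro k hk
      rw [wEdge, show m - 1 - k = m - (k+1) from by omega,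
        show m - (k+1) + 1 = m - k from by omega,
        rayfact (k+1) (by omega), rayfact k (by omega)]
      exact Sym2.eq_swap
    refine ⟨P.walk.getVert m, u, m, by omega, isStep_neg hd1,
      by rw [absd_neg, hldir]; exact hdd, hbend,
      ⟨m, by omega, by omega, rfl⟩, ?_, ?_, ?_⟩
    · -- b0 ∈ l.pts : endpoint of edge m of s
      have hme : wEdge P.walk m ∈ Segment.edges s := ⟨m, by omega, by omega, rfl⟩
      have := hl hme
      rw [wEdge] at this
      exact (line_pts_of_edge l this).1
    · intro k hk
      rw [← hedge k hk]
      exact (mem_edges_iff P.walk _).mpr ⟨m - 1 - k, by omega, rfl⟩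
    · intro e he
      obtain ⟨t, ht, rfl⟩ := (mem_edges_iff P.walk e).mp he
      rcases Nat.lt_or_ge t m with htm | htm
      · right
        refine ⟨m - 1 - t, by omega, ?_⟩
        rw [← hedge (m - 1 - t) (by omega), show m - 1 - (m - 1 - t) = t from by omega]
      · left
        have hes : wEdge P.walk t ∈ Segment.edges s := ⟨t, by omega, by omega, rfl⟩
        refine ⟨hl hes, P.walk.getVert t, P.walk.getVert (t+1), rfl, ?_,
          ⟨t, by omega, by omega, rfl⟩, ⟨t+1, by omega, by omega, rfl⟩⟩
        intro hc
        have hs := hrun2 t (by omega) (by omega)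
        have h1 := congrArg Prod.fst hs
        have h2 := congrArg Prod.snd hs
        simp only [stepv] at h1 h2
        have c1 := congrArg Prod.fst hc
        have c2 := congrArg Prod.snd hc
        rcases step_ne_zero hd2 with hne | hne <;> [exact hne (by omega); exact hne (by omega)]
lemma edir_ray (b u : ℤ × ℤ) (k : ℕ) :
    edir s(ray b u k, ray b u (k+1)) = absd u := by
  rw [edir_mk]
  have h1 : (ray b u k).1 - (ray b u (k+1)).1 = -u.1 := by
    simp only [ray]; push_cast; ring
  have h2 : (ray b u k).2 - (ray b u (k+1)).2 = -u.2 := by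
    simp only [ray]; push_cast; ring
  rw [h1, h2, abs_neg, abs_neg]; rfl

lemma ray_zero (b u : ℤ × ℤ) : ray b u 0 = b := by
  simp [ray]

theorem stmt2' (P1 P2 : TPath)
    (h1 : bendCount P1.walk = 1) (h2 : bendCount P2.walk = 1)
    (s1 : Segment P1) (s2 : Segment P2) (l : GridLine)
    (hl1 : s1.edges ⊆ l.edges) (hl2 : s2.edges ⊆ l.edges)
    (b : ℤ × ℤ) (hb : s1.pts ∩ s2.pts = {b})
    (hint : (pEdges P1 ∩ pEdges P2).Nonempty) :
    IsBendAt P1.walk b ∧ IsBendAt P2.walk b ∧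
    (∃ e ∈ pEdges P1 ∩ pEdges P2, b ∈ e) ∧
    ¬ (pEdges P1 ∩ pEdges P2 ⊆ l.edges) := by
  obtain ⟨e, he1, he2⟩ := hint
  obtain ⟨b1, u1, n1, hn1, hu1, hud1, hbend1, hbs1, hbl1, hmem1, hdich1⟩ := main1 P1 h1 s1 l hl1
  obtain ⟨b2, u2, n2, hn2, hu2, hud2, hbend2, hbs2, hbl2, hmem2, hdich2⟩ := main1 P2 h2 s2 l hl2
  have hbmem : ∀ x : ℤ × ℤ, x ∈ s1.pts → x ∈ s2.pts → x = b := by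
    intro x hx1 hx2
    have hx : x ∈ s1.pts ∩ s2.pts := ⟨hx1, hx2⟩
    rw [hb] at hx
    exact hx
  rcases hdich1 e he1 with ⟨hel, p, q, rfl, hpq, hp1, hq1⟩ | ⟨k1, hk1, rfl⟩
  · rcases hdich2 _ he2 with ⟨_, p', q', heq, hpq', hp2, hq2⟩ | ⟨k2, hk2, heq⟩
    · exfalso
      rw [Sym2.eq_iff] at heq
      have hp2' : p ∈ s2.pts ∧ q ∈ s2.pts := by
        rcases heq with ⟨hpp, hqq⟩ | ⟨hpp, hqq⟩
        · exact ⟨hpp ▸ hp2, hqq ▸ hq2⟩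
        · exact ⟨hpp ▸ hq2, hqq ▸ hp2⟩
      exact hpq ((hbmem p hp1 hp2'.1).trans (hbmem q hq1 hp2'.2).symm)
    · exfalso
      have hE1 : edir s(p,q) = ldirv l.dir := edir_line_edge l hel
      have hE2 : edir s(p,q) = absd u2 := by rw [heq]; exact edir_ray b2 u2 k2
      exact hud2 (hE2.symm.trans hE1)
  · rcases hdich2 _ he2 with ⟨hel, p', q', heq, hpq', hp2, hq2⟩ | ⟨k2, hk2, heq⟩
    · exfalso
      have hE1 : edir s(ray b1 u1 k1, ray b1 u1 (k1+1)) = ldirv l.dir := edir_line_edge l hel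
      have hE2 := edir_ray b1 u1 k1
      exact hud1 (hE2.symm.trans hE1)
    · -- main case: both edges on the bend rays
      rw [Sym2.eq_iff] at heq
      have hkey : b1 = b2 ∧ u1 = u2 := by
        rcases heq with ⟨ha, hbb⟩ | ⟨ha, hbb⟩
        · have a1 := congrArg Prod.fst ha
          have a2 := congrArg Prod.snd ha
          have c1 := congrArg Prod.fst hbb
          have c2 := congrArg Prod.snd hbb
          simp only [ray] at a1 a2 c1 c2
          push_cast at a1 a2 c1 c2
          have uc1 : u1.1 = u2.1 := by linear_combination c1 - a1
          have uc2 : u1.2 = u2.2 := by linear_combination c2 - a2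
          have e1 : b1.1 - b2.1 = ((k2:ℤ) - (k1:ℤ)) * u2.1 := by
            linear_combination a1 - (k1:ℤ) * uc1
          have e2 : b1.2 - b2.2 = ((k2:ℤ) - (k1:ℤ)) * u2.2 := by
            linear_combination a2 - (k1:ℤ) * uc2
          exact ⟨line_cancel l hu2 hud2 hbl1 hbl2 e1 e2, Prod.ext uc1 uc2⟩
        · exfalso
          have a1 := congrArg Prod.fst ha
          have a2 := congrArg Prod.snd ha
          have c1 := congrArg Prod.fst hbb
          have c2 := congrArg Prod.snd hbb
          simp only [ray] at a1 a2 c1 c2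
          push_cast at a1 a2 c1 c2
          have uc1 : u1.1 = -u2.1 := by linear_combination c1 - a1
          have uc2 : u1.2 = -u2.2 := by linear_combination c2 - a2
          have e1 : b1.1 - b2.1 = ((k1:ℤ) + (k2:ℤ) + 1) * u2.1 := by
            linear_combination a1 - (k1:ℤ) * uc1
          have e2 : b1.2 - b2.2 = ((k1:ℤ) + (k2:ℤ) + 1) * u2.2 := by
            linear_combination a2 - (k1:ℤ) * uc2
          have hb12 : b1 = b2 := line_cancel l hu2 hud2 hbl1 hbl2 e1 e2
          have hz1 : ((k1:ℤ) + (k2:ℤ) + 1) * u2.1 = 0 := by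
            rw [← e1, hb12]; ring
          have hz2 : ((k1:ℤ) + (k2:ℤ) + 1) * u2.2 = 0 := by
            rw [← e2, hb12]; ring
          rcases step_ne_zero hu2 with hne | hne
          · rcases mul_eq_zero.mp hz1 with hc | hc
            · omega
            · exact hne hc
          · rcases mul_eq_zero.mp hz2 with hc | hc
            · omega
            · exact hne hc
      obtain ⟨hb12, huu⟩ := hkey
      have hbb1 : b1 = b := hbmem b1 hbs1 (hb12 ▸ hbs2)
      have he01 : s(ray b u1 0, ray b u1 1) ∈ pEdges P1 := hbb1 ▸ hmem1 0 (by omega)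
      have he02 : s(ray b u1 0, ray b u1 1) ∈ pEdges P2 := by
        have := hmem2 0 (by omega)
        rw [← huu, ← hb12, hbb1] at this
        exact this
      refine ⟨hbb1 ▸ hbend1, ?_, ⟨s(ray b u1 0, ray b u1 1), ⟨he01, he02⟩, ?_⟩, ?_⟩
      · have : b2 = b := by rw [← hb12, hbb1]
        exact this ▸ hbend2
      · rw [Sym2.mem_iff]
        left
        rw [ray_zero]
      · intro hsub
        have hmm := hsub ⟨he01, he02⟩
        have hE1 := edir_line_edge l hmm
        have hE2 := edir_ray b u1 0
        exact hud1 (hE2.symm.trans hE1)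

/-- If segments of two exactly-one-bend paths lie on the same grid
line and share exactly one grid point `b`, and the paths share an edge, then `b` is
the bend point of both paths, `b` is an endpoint of some common edge, and the edge
intersection is not contained in the line. -/
theorem stmt2 (P1 P2 : TPath)
    (h1 : bendCount P1.walk = 1) (h2 : bendCount P2.walk = 1)
    (s1 : Segment P1) (s2 : Segment P2) (l : GridLine)
    (hl1 : s1.edges ⊆ l.edges) (hl2 : s2.edges ⊆ l.edges)
    (b : ℤ × ℤ) (hb : s1.pts ∩ s2.pts = {b})
    (hint : (pEdges P1 ∩ pEdges P2).Nonempty) :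
    IsBendAt P1.walk b ∧ IsBendAt P2.walk b ∧
    (∃ e ∈ pEdges P1 ∩ pEdges P2, b ∈ e) ∧
    ¬ (pEdges P1 ∩ pEdges P2 ⊆ l.edges) := by
  exact stmt2' P1 P2 h1 h2 s1 s2 l hl1 hl2 b hb hint
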